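/- Let γ > 0 and u₁, u₂, p₁, p₂ ∈ ℝ with u₁ = -[γ p₁ - u₁]_+ (exact contact condition). Set e := u₁ - u₂, P_i := γ p_i - u_i. Then -γ⁻¹ e² - ([P₁]_+ - [P₂]_+)(p₁ - p₂ - γ⁻¹e) - 2γ⁻¹ e([P₁]_+ - [P₂]_+) ≤ -γ⁻¹([P₂]_+ + u₂)². -/
import Mathlib
noncomputable def pp (x : ℝ) : ℝ := max 0 x

lemma pp_key (x y : ℝ) : (pp x - pp y)^2 ≤ (pp x - pp y) * (x - y) := by
  unfold pp
  rcases le_total x 0 with hx | hx <;> rcases le_total y 0 with hy | hy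
  · rw [max_eq_left hx, max_eq_left hy]; nlinarith
  · rw [max_eq_left hx, max_eq_right hy]; nlinarith
  · rw [max_eq_right hx, max_eq_left hy]; nlinarith
  · rw [max_eq_right hx, max_eq_right hy]; nlinarith

theorem stmt11 (γ : ℝ) (hγ : 0 < γ) (u₁ u₂ p₁ p₂ : ℝ)
    (hc : u₁ = -pp (γ * p₁ - u₁)) :
    -γ⁻¹ * (u₁ - u₂)^2
      - (pp (γ * p₁ - u₁) - pp (γ * p₂ - u₂)) * (p₁ - p₂ - γ⁻¹ * (u₁ - u₂))
      - 2 * γ⁻¹ * (u₁ - u₂) * (pp (γ * p₁ - u₁) - pp (γ * p₂ - u₂))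
      ≤ -γ⁻¹ * (pp (γ * p₂ - u₂) + u₂)^2 := by
  have h := pp_key (γ * p₁ - u₁) (γ * p₂ - u₂)
  have hγ' : (0:ℝ) < γ⁻¹ := inv_pos.mpr hγ
  set A := pp (γ * p₁ - u₁) with hA
  set B := pp (γ * p₂ - u₂) with hB
  have h' := mul_le_mul_of_nonneg_left h hγ'.le
  have h'' : γ⁻¹ * ((A - B) * (γ * p₁ - u₁ - (γ * p₂ - u₂)))
      = (A - B) * (p₁ - p₂ - γ⁻¹ * (u₁ - u₂)) := by
    have hm : γ⁻¹ * γ = 1 := inv_mul_cancel₀ hγ.ne'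
    linear_combination ((A - B) * (p₁ - p₂)) * hm
  rw [h''] at h'
  have hcc : (B + u₂)^2 = ((u₁ - u₂) + (A - B))^2 := by rw [hc]; ring
  nlinarith [h', hcc, hγ']
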